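/- Let Q be a contraction compressor with parameter δ satisfying additionally E[Q(y)] = δy for all y. Let e_1,…,e_n, g_1,…,g_n ∈ ℝ^d, apply Q independently to each e_τ + g_τ, and set e_τ⁺ = e_τ + g_τ − Q(e_τ + g_τ), e = (1/n)∑_τ e_τ, e⁺ = (1/n)∑_τ e_τ⁺. Then E‖e⁺‖² ≤ (1−δ)‖e + (1/n)∑_τ g_τ‖² + ((1−δ)δ/n²)∑_{τ=1}^n ‖e_τ + g_τ‖². -/

import Mathlib

open MeasureTheory Finset
open scoped RealInnerProductSpace



section Helpers

variable {n : ℕ} {Ω : Type*} [MeasurableSpace Ω] (μ : Measure Ω) [IsProbabilityMeasure μ]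

lemma pi_integrable_single (τ : Fin n) {F : Ω → ℝ} (hF : Integrable F μ) :
    Integrable (fun ω : Fin n → Ω => F (ω τ)) (Measure.pi fun _ => μ) := by
  letI : MeasureSpace Ω := ⟨μ⟩
  haveI : IsProbabilityMeasure (volume : Measure Ω) := inferInstanceAs (IsProbabilityMeasure μ)
  have key : ∀ ω : Fin n → Ω,
      (∏ σ, (fun σ => if σ = τ then F else fun _ => (1:ℝ)) σ (ω σ)) = F (ω τ) := by
    intro ω
    rw [Fintype.prod_eq_single τ (fun x hx => by simp [hx])]
    simp
  have h := MeasureTheory.Integrable.fintype_prod (𝕜 := ℝ) (μ := fun _ => μ)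
    (f := fun σ => if σ = τ then F else fun _ => (1:ℝ))
    (fun σ => by
      by_cases hσ : σ = τ
      · simpa [hσ] using hF
      · simp [hσ])
  simp_rw [key] at h
  exact h

lemma pi_integral_single (τ : Fin n) (F : Ω → ℝ) :
    ∫ ω : Fin n → Ω, F (ω τ) ∂(Measure.pi fun _ => μ) = ∫ x, F x ∂μ := by
  letI : MeasureSpace Ω := ⟨μ⟩
  haveI : IsProbabilityMeasure (volume : Measure Ω) := inferInstanceAs (IsProbabilityMeasure μ)
  have key : ∀ ω : Fin n → Ω,
      F (ω τ) = ∏ σ, (fun σ => if σ = τ then F else fun _ => (1:ℝ)) σ (ω σ) := by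
    intro ω
    rw [Fintype.prod_eq_single τ (fun x hx => by simp [hx])]
    simp
  have hvol : (Measure.pi fun _ : Fin n => μ) = (volume : Measure (Fin n → Ω)) :=
    volume_pi.symm
  rw [hvol]
  simp_rw [key]
  rw [MeasureTheory.integral_fintype_prod_volume_eq_prod (𝕜 := ℝ)]
  rw [Fintype.prod_eq_single τ (fun x hx => by simp [hx])]
  simp only [if_pos rfl]
  rfl

lemma pi_integrable_pair {τ₁ τ₂ : Fin n} (hne : τ₁ ≠ τ₂) {F G : Ω → ℝ}
    (hF : Integrable F μ) (hG : Integrable G μ) :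
    Integrable (fun ω : Fin n → Ω => F (ω τ₁) * G (ω τ₂)) (Measure.pi fun _ => μ) := by
  letI : MeasureSpace Ω := ⟨μ⟩
  haveI : IsProbabilityMeasure (volume : Measure Ω) := inferInstanceAs (IsProbabilityMeasure μ)
  have key : ∀ ω : Fin n → Ω,
      (∏ σ, (fun σ => if σ = τ₁ then F else if σ = τ₂ then G else fun _ => (1:ℝ)) σ (ω σ))
        = F (ω τ₁) * G (ω τ₂) := by
    intro ω
    rw [Fintype.prod_eq_mul τ₁ τ₂ hne (fun x hx => by simp [hx.1, hx.2])]
    simp [hne, hne.symm]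
  have h := MeasureTheory.Integrable.fintype_prod (𝕜 := ℝ) (μ := fun _ => μ)
    (f := fun σ => if σ = τ₁ then F else if σ = τ₂ then G else fun _ => (1:ℝ))
    (fun σ => by
      by_cases h1 : σ = τ₁
      · simpa [h1] using hF
      · by_cases h2 : σ = τ₂
        · subst h2; simpa [h1, Ne.symm h1] using hG
        · simp [h1, h2])
  simp_rw [key] at h
  exact h

lemma pi_integral_pair {τ₁ τ₂ : Fin n} (hne : τ₁ ≠ τ₂) (F G : Ω → ℝ) :
    ∫ ω : Fin n → Ω, F (ω τ₁) * G (ω τ₂) ∂(Measure.pi fun _ => μ)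
      = (∫ x, F x ∂μ) * ∫ x, G x ∂μ := by
  letI : MeasureSpace Ω := ⟨μ⟩
  haveI : IsProbabilityMeasure (volume : Measure Ω) := inferInstanceAs (IsProbabilityMeasure μ)
  have key : ∀ ω : Fin n → Ω,
      F (ω τ₁) * G (ω τ₂)
        = ∏ σ, (fun σ => if σ = τ₁ then F else if σ = τ₂ then G else fun _ => (1:ℝ)) σ (ω σ) := by
    intro ω
    rw [Fintype.prod_eq_mul τ₁ τ₂ hne (fun x hx => by simp [hx.1, hx.2])]
    simp [hne, hne.symm]
  have hvol : (Measure.pi fun _ : Fin n => μ) = (volume : Measure (Fin n → Ω)) :=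
    volume_pi.symm
  rw [hvol]
  simp_rw [key]
  rw [MeasureTheory.integral_fintype_prod_volume_eq_prod (𝕜 := ℝ)]
  rw [Fintype.prod_eq_mul τ₁ τ₂ hne (fun x hx => by simp [hx.1, hx.2])]
  simp only [if_pos rfl, if_neg (Ne.symm hne)]
  rfl

end Helpers


theorem averaged_error_second_moment {d n : ℕ} {Ω : Type*} [MeasurableSpace Ω]
    (μ : Measure Ω) [IsProbabilityMeasure μ]
    (Q : Ω → EuclideanSpace ℝ (Fin d) → EuclideanSpace ℝ (Fin d))
    (δ : ℝ) (hδ0 : 0 < δ) (hδ1 : δ ≤ 1)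
    (hcontract : ∀ y, (∫ ω, ‖Q ω y - y‖ ^ 2 ∂μ) ≤ (1 - δ) * ‖y‖ ^ 2)
    (hlin : ∀ y, (∫ ω, Q ω y ∂μ) = δ • y)
    (hint : ∀ y, Integrable (fun ω => Q ω y) μ)
    (hint2 : ∀ y, Integrable (fun ω => ‖Q ω y‖ ^ 2) μ)
    (hn : 0 < n)
    (e g : Fin n → EuclideanSpace ℝ (Fin d)) :
    (∫ ω : Fin n → Ω,
        ‖(1 / (n : ℝ)) • ∑ τ, (e τ + g τ - Q (ω τ) (e τ + g τ))‖ ^ 2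
        ∂(Measure.pi fun _ => μ)) ≤
      (1 - δ) * ‖(1 / (n : ℝ)) • ∑ τ, e τ + (1 / (n : ℝ)) • ∑ τ, g τ‖ ^ 2 +
        ((1 - δ) * δ / (n : ℝ) ^ 2) * ∑ τ, ‖e τ + g τ‖ ^ 2 := by
  set y : Fin n → EuclideanSpace ℝ (Fin d) := fun τ => e τ + g τ with hy
  set X : Fin n → Ω → EuclideanSpace ℝ (Fin d) := fun τ ω' => y τ - Q ω' (y τ) with hX
  -- basic integrability facts
  have hXint : ∀ τ, Integrable (X τ) μ := fun τ => (integrable_const (y τ)).sub (hint (y τ))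
  have hmean : ∀ τ, (∫ ω', X τ ω' ∂μ) = (1 - δ) • y τ := by
    intro τ
    simp only [hX]
    rw [integral_sub (integrable_const (y τ)) (hint (y τ)), integral_const, hlin]
    simp [measure_univ, sub_smul]
  have hXcint : ∀ τ (i : Fin d), Integrable (fun ω' => X τ ω' i) μ := by
    intro τ i
    exact (EuclideanSpace.proj (𝕜 := ℝ) i).integrable_comp (hXint τ)
  have hXcmean : ∀ τ (i : Fin d), (∫ ω', X τ ω' i ∂μ) = (1 - δ) * y τ i := by
    intro τ i
    calc (∫ ω', X τ ω' i ∂μ)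
        = ∫ ω', (EuclideanSpace.proj (𝕜 := ℝ) i) (X τ ω') ∂μ := rfl
      _ = (EuclideanSpace.proj (𝕜 := ℝ) i) (∫ ω', X τ ω' ∂μ) :=
          (EuclideanSpace.proj (𝕜 := ℝ) i).integral_comp_comm (hXint τ)
      _ = (1 - δ) * y τ i := by rw [hmean]; simp
  have hXsq : ∀ τ, Integrable (fun ω' => ‖X τ ω'‖ ^ 2) μ := by
    intro τ
    have h1 : Integrable (fun ω' => ⟪y τ, Q ω' (y τ)⟫) μ :=
      ((innerSL ℝ (y τ)).integrable_comp (hint (y τ)))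
    have h2 : Integrable
        (fun ω' => ‖Q ω' (y τ)‖ ^ 2 - 2 * ⟪y τ, Q ω' (y τ)⟫ + ‖y τ‖ ^ 2) μ :=
      ((hint2 (y τ)).sub (h1.const_mul 2)).add (integrable_const _)
    refine h2.congr (Filter.Eventually.of_forall fun ω' => ?_)
    simp only [hX]
    rw [show y τ - Q ω' (y τ) = -(Q ω' (y τ) - y τ) by abel, norm_neg,
      norm_sub_sq_real, real_inner_comm]
  have hXnorm : ∀ τ, (∫ ω', ‖X τ ω'‖ ^ 2 ∂μ) ≤ (1 - δ) * ‖y τ‖ ^ 2 := by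
    intro τ
    have : ∀ ω', ‖X τ ω'‖ ^ 2 = ‖Q ω' (y τ) - y τ‖ ^ 2 := by
      intro ω'; simp only [hX]; rw [norm_sub_rev]
    simp_rw [this]
    exact hcontract (y τ)
  -- the matrix of cross expectations
  set I : Fin n → Fin n → ℝ :=
    fun τ₁ τ₂ => ∫ ω : Fin n → Ω, ⟪X τ₁ (ω τ₁), X τ₂ (ω τ₂)⟫ ∂(Measure.pi fun _ => μ) with hI
  -- integrability of each cross term over π
  have hcross_int : ∀ τ₁ τ₂ : Fin n,
      Integrable (fun ω : Fin n → Ω => ⟪X τ₁ (ω τ₁), X τ₂ (ω τ₂)⟫) (Measure.pi fun _ => μ) := by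
    intro τ₁ τ₂
    by_cases hτ : τ₁ = τ₂
    · subst hτ
      have := pi_integrable_single (n := n) μ τ₁ (hXsq τ₁)
      refine this.congr (Filter.Eventually.of_forall fun ω => ?_)
      exact (real_inner_self_eq_norm_sq _).symm
    · have : ∀ ω : Fin n → Ω, ⟪X τ₁ (ω τ₁), X τ₂ (ω τ₂)⟫
          = ∑ i, (X τ₁ (ω τ₁) i) * (X τ₂ (ω τ₂) i) := by
        intro ω
        simp [PiLp.inner_apply, RCLike.inner_apply, conj_trivial]
        exact Finset.sum_congr rfl fun i _ => mul_comm _ _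
      simp_rw [this]
      exact integrable_finset_sum _ fun i _ =>
        pi_integrable_pair μ hτ (hXcint τ₁ i) (hXcint τ₂ i)
  -- value of off-diagonal terms
  have hoff : ∀ τ₁ τ₂ : Fin n, τ₁ ≠ τ₂ →
      I τ₁ τ₂ = (1 - δ) ^ 2 * ⟪y τ₁, y τ₂⟫ := by
    intro τ₁ τ₂ hτ
    rw [hI]
    have hpt : ∀ ω : Fin n → Ω, ⟪X τ₁ (ω τ₁), X τ₂ (ω τ₂)⟫
        = ∑ i, (X τ₁ (ω τ₁) i) * (X τ₂ (ω τ₂) i) := by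
      intro ω; simp [PiLp.inner_apply, RCLike.inner_apply, conj_trivial]
      exact Finset.sum_congr rfl fun i _ => mul_comm _ _
    simp_rw [hpt]
    rw [integral_finset_sum _ fun i _ =>
      pi_integrable_pair μ hτ (hXcint τ₁ i) (hXcint τ₂ i)]
    have : ∀ i : Fin d, (∫ ω : Fin n → Ω, (X τ₁ (ω τ₁) i) * (X τ₂ (ω τ₂) i) ∂(Measure.pi fun _ => μ))
        = ((1 - δ) * y τ₁ i) * ((1 - δ) * y τ₂ i) := by
      intro i
      have h2 := pi_integral_pair (n := n) μ hτ (fun x => X τ₁ x i) (fun x => X τ₂ x i)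
      exact h2.trans (by rw [hXcmean, hXcmean])
    simp_rw [this]
    rw [show ⟪y τ₁, y τ₂⟫ = ∑ i, y τ₁ i * y τ₂ i by
      simp [PiLp.inner_apply, RCLike.inner_apply, conj_trivial]
      exact Finset.sum_congr rfl fun i _ => mul_comm _ _]
    rw [Finset.mul_sum]
    exact Finset.sum_congr rfl fun i _ => by ring
  -- bound on diagonal terms
  have hdiag : ∀ τ : Fin n, I τ τ ≤ (1 - δ) * ‖y τ‖ ^ 2 := by
    intro τ
    rw [hI]
    have hpt : ∀ ω : Fin n → Ω, ⟪X τ (ω τ), X τ (ω τ)⟫ = ‖X τ (ω τ)‖ ^ 2 := fun ω =>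
      real_inner_self_eq_norm_sq _
    simp_rw [hpt]
    rw [pi_integral_single μ τ (fun ω' => ‖X τ ω'‖ ^ 2)]
    exact hXnorm τ
  -- expansion of the integral
  have hexp : (∫ ω : Fin n → Ω, ‖∑ τ, X τ (ω τ)‖ ^ 2 ∂(Measure.pi fun _ => μ)) = ∑ τ₁, ∑ τ₂, I τ₁ τ₂ := by
    have hpt : ∀ ω : Fin n → Ω,
        ‖∑ τ, X τ (ω τ)‖ ^ 2 = ∑ τ₁, ∑ τ₂, ⟪X τ₁ (ω τ₁), X τ₂ (ω τ₂)⟫ := by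
      intro ω
      rw [← real_inner_self_eq_norm_sq, sum_inner]
      exact Finset.sum_congr rfl fun τ₁ _ => by rw [inner_sum]
    simp_rw [hpt]
    rw [integral_finset_sum _ fun τ₁ _ => integrable_finset_sum _ fun τ₂ _ => hcross_int τ₁ τ₂]
    exact Finset.sum_congr rfl fun τ₁ _ => integral_finset_sum _ fun τ₂ _ => hcross_int τ₁ τ₂
  -- bound the double sum
  set S : EuclideanSpace ℝ (Fin d) := ∑ τ, y τ with hS
  have hsum : ∑ τ₁, ∑ τ₂, I τ₁ τ₂
      ≤ (1 - δ) ^ 2 * ‖S‖ ^ 2 + (1 - δ) * δ * ∑ τ, ‖y τ‖ ^ 2 := by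
    have hb : ∀ τ₁ τ₂ : Fin n, I τ₁ τ₂
        ≤ (1 - δ) ^ 2 * ⟪y τ₁, y τ₂⟫ + (if τ₂ = τ₁ then (1 - δ) * δ * ‖y τ₁‖ ^ 2 else 0) := by
      intro τ₁ τ₂
      by_cases hτ : τ₂ = τ₁
      · subst hτ
        rw [if_pos rfl, real_inner_self_eq_norm_sq]
        have h := hdiag τ₂
        have heq : (1 - δ) ^ 2 * ‖y τ₂‖ ^ 2 + (1 - δ) * δ * ‖y τ₂‖ ^ 2
            = (1 - δ) * ‖y τ₂‖ ^ 2 := by ring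
        rw [heq]
        exact h
      · rw [if_neg hτ, hoff τ₁ τ₂ (fun h => hτ h.symm), add_zero]
    calc ∑ τ₁, ∑ τ₂, I τ₁ τ₂
        ≤ ∑ τ₁, ∑ τ₂, ((1 - δ) ^ 2 * ⟪y τ₁, y τ₂⟫
            + (if τ₂ = τ₁ then (1 - δ) * δ * ‖y τ₁‖ ^ 2 else 0)) :=
          Finset.sum_le_sum fun τ₁ _ => Finset.sum_le_sum fun τ₂ _ => hb τ₁ τ₂
      _ = (1 - δ) ^ 2 * ‖S‖ ^ 2 + (1 - δ) * δ * ∑ τ, ‖y τ‖ ^ 2 := by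
          simp only [Finset.sum_add_distrib, Finset.sum_ite_eq', Finset.mem_univ, if_true]
          congr 1
          · simp_rw [← Finset.mul_sum]
            congr 1
            rw [hS, ← real_inner_self_eq_norm_sq, sum_inner]
            exact Finset.sum_congr rfl fun τ₁ _ => by rw [inner_sum]
          · rw [Finset.mul_sum]
  -- put everything together
  have hnpos : (0:ℝ) < n := by exact_mod_cast hn
  have hLHS : (∫ ω : Fin n → Ω,
      ‖(1 / (n : ℝ)) • ∑ τ, (e τ + g τ - Q (ω τ) (e τ + g τ))‖ ^ 2 ∂(Measure.pi fun _ => μ))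
      = (1 / (n:ℝ)) ^ 2 * ∑ τ₁, ∑ τ₂, I τ₁ τ₂ := by
    rw [← hexp]
    have hpt : ∀ ω : Fin n → Ω,
        ‖(1 / (n : ℝ)) • ∑ τ, (e τ + g τ - Q (ω τ) (e τ + g τ))‖ ^ 2
          = (1 / (n:ℝ)) ^ 2 * ‖∑ τ, X τ (ω τ)‖ ^ 2 := by
      intro ω
      rw [norm_smul, mul_pow, Real.norm_eq_abs, sq_abs]
    simp_rw [hpt]
    exact integral_const_mul _ _
  have hRHS1 : (1 / (n : ℝ)) • ∑ τ, e τ + (1 / (n : ℝ)) • ∑ τ, g τ = (1 / (n:ℝ)) • S := by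
    rw [← smul_add, hS, hy, ← Finset.sum_add_distrib]
  rw [hLHS, hRHS1]
  have hnormS : ‖(1 / (n:ℝ)) • S‖ ^ 2 = (1 / (n:ℝ)) ^ 2 * ‖S‖ ^ 2 := by
    rw [norm_smul, mul_pow, Real.norm_eq_abs, sq_abs]
  rw [hnormS]
  have h1 : (1 / (n:ℝ)) ^ 2 * ∑ τ₁, ∑ τ₂, I τ₁ τ₂
      ≤ (1 / (n:ℝ)) ^ 2 * ((1 - δ) ^ 2 * ‖S‖ ^ 2 + (1 - δ) * δ * ∑ τ, ‖y τ‖ ^ 2) :=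
    mul_le_mul_of_nonneg_left hsum (by positivity)
  refine h1.trans ?_
  have hδ' : (0:ℝ) ≤ 1 - δ := by linarith
  have hsq : (1 - δ) ^ 2 ≤ 1 - δ := by nlinarith
  have hS2 : (0:ℝ) ≤ ‖S‖ ^ 2 := by positivity
  have hysum : (0:ℝ) ≤ ∑ τ, ‖y τ‖ ^ 2 :=
    Finset.sum_nonneg fun τ _ => by positivity
  have hne : ((n:ℝ)) ^ 2 ≠ 0 := by positivity
  rw [show ((1 - δ) * δ / (n : ℝ) ^ 2) = (1 / (n:ℝ)) ^ 2 * ((1 - δ) * δ) by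
    field_simp]
  have hn2 : (0:ℝ) ≤ (1 / (n:ℝ)) ^ 2 := by positivity
  nlinarith [mul_le_mul_of_nonneg_left (mul_le_mul_of_nonneg_right hsq hS2) hn2]
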